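/- arXiv:0906.4609 — 2 statements merged into one kernel-verified Lean document; each statement's English description precedes it below -/
import Mathlib

section
/- A finite simple graph G is a König–Egerváry graph if and only if every maximum independent set of G is a critical independent set. -/
namespace KEPaper

open SimpleGraph

variable {V : Type*}

/-- `nbhd G S` is the set of vertices having a neighbor in `S`. -/
def nbhd (G : SimpleGraph V) (S : Set V) : Set V := {v | ∃ w ∈ S, G.Adj v w}

/-- `S` is an independent set of `G`: no two vertices of `S` are adjacent. -/
def IsIndep (G : SimpleGraph V) (S : Set V) : Prop :=
  S.Pairwise fun u v => ¬ G.Adj u v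

/-- The independence number `α(G)`: maximum cardinality of an independent set. -/
noncomputable def indepNum (G : SimpleGraph V) : ℕ :=
  sSup {n | ∃ S : Set V, IsIndep G S ∧ S.ncard = n}

/-- The matching number `μ(G)`: maximum cardinality of a matching. -/
noncomputable def matchNum (G : SimpleGraph V) : ℕ :=
  sSup {n | ∃ M : Subgraph G, M.IsMatching ∧ M.edgeSet.ncard = n}

/-- `S` is a maximum independent set of `G`. -/
def IsMaxIndep (G : SimpleGraph V) (S : Set V) : Prop :=
  IsIndep G S ∧ S.ncard = indepNum G

/-- The critical difference `d(G) = max {|S| - |N(S)| : S independent}`. -/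
noncomputable def critDiff (G : SimpleGraph V) : ℤ :=
  sSup {d : ℤ | ∃ S : Set V, IsIndep G S ∧ d = (S.ncard : ℤ) - ((nbhd G S).ncard : ℤ)}

/-- `S` is a critical independent set: independent with `|S| - |N(S)| = d(G)`. -/
def IsCritIndep (G : SimpleGraph V) (S : Set V) : Prop :=
  IsIndep G S ∧ (S.ncard : ℤ) - ((nbhd G S).ncard : ℤ) = critDiff G

/-- `core G` is the intersection of all maximum independent sets of `G`. -/
def core (G : SimpleGraph V) : Set V := ⋂ S ∈ {S : Set V | IsMaxIndep G S}, S

/-- `G` is a König–Egerváry graph: `|V(G)| = α(G) + μ(G)`. -/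
def KoenigEgervary (G : SimpleGraph V) : Prop :=
  Nat.card V = indepNum G + matchNum G

/-- `A` is a local maximum independent set of `G`: it is a maximum independent
set of the subgraph of `G` induced by `N[A] = A ∪ N(A)`. -/
def IsLocalMaxIndep (G : SimpleGraph V) (A : Set V) : Prop :=
  IsMaxIndep (G.induce (A ∪ nbhd G A)) {x : ↥(A ∪ nbhd G A) | ↑x ∈ A}

set_option linter.unusedSectionVars false

section AuxLemmas

variable [Finite V] {G : SimpleGraph V} {M : Subgraph G} {S : Set V}

lemma ncard_le_card (S : Set V) : S.ncard ≤ Nat.card V :=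
  (Set.ncard_le_ncard (Set.subset_univ S) Set.finite_univ).trans_eq (Set.ncard_univ V)

lemma indep_bddAbove (G : SimpleGraph V) :
    BddAbove {n | ∃ S : Set V, IsIndep G S ∧ S.ncard = n} := by
  refine ⟨Nat.card V, fun n hn => ?_⟩
  obtain ⟨S, -, rfl⟩ := hn
  exact ncard_le_card S

lemma le_indepNum (h : IsIndep G S) : S.ncard ≤ indepNum G :=
  le_csSup (indep_bddAbove G) ⟨S, h, rfl⟩

lemma indep_empty (G : SimpleGraph V) : IsIndep G (∅ : Set V) := by
  simp [IsIndep]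

lemma nbhd_empty (G : SimpleGraph V) : nbhd G (∅ : Set V) = ∅ := by
  simp [nbhd]

lemma exists_maxIndep (G : SimpleGraph V) : ∃ S : Set V, IsMaxIndep G S := by
  have h := Nat.sSup_mem (s := {n | ∃ S : Set V, IsIndep G S ∧ S.ncard = n})
    ⟨0, ∅, indep_empty G, by simp⟩ (indep_bddAbove G)
  obtain ⟨S, hS, hc⟩ := h
  exact ⟨S, hS, hc⟩

lemma disjoint_nbhd (h : IsIndep G S) : Disjoint S (nbhd G S) := by
  rw [Set.disjoint_left]
  rintro v hv ⟨w, hw, hadj⟩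
  rcases eq_or_ne v w with rfl | hne
  · exact G.loopless.irrefl v hadj
  · exact h hv hw hne hadj

lemma indep_symm (G : SimpleGraph V) : Symmetric (fun u v => ¬ G.Adj u v) :=
  fun _ _ h h2 => h h2.symm

lemma maxIndep_cover (h : IsMaxIndep G S) : S ∪ nbhd G S = Set.univ := by
  by_contra hne
  obtain ⟨v, hv⟩ : ∃ v, v ∉ S ∪ nbhd G S := by
    by_contra hc
    push_neg at hc
    exact hne (Set.eq_univ_of_forall hc)
  rw [Set.mem_union] at hv
  push_neg at hv
  obtain ⟨hvS, hvN⟩ := hv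
  have hvN' : ∀ w ∈ S, ¬ G.Adj v w := by
    intro w hw hadj
    exact hvN ⟨w, hw, hadj⟩
  have hins : IsIndep G (insert v S) := by
    haveI : Std.Symm (fun u v : V => ¬ G.Adj u v) := ⟨fun a b hab => indep_symm G hab⟩
    rw [IsIndep, Set.pairwise_insert_of_symm]
    exact ⟨h.1, fun w hw _ => hvN' w hw⟩
  have hcard : (insert v S).ncard = S.ncard + 1 :=
    Set.ncard_insert_of_notMem hvS (Set.toFinite S)
  have := le_indepNum hins
  rw [hcard, h.2] at this
  omega

lemma maxIndep_cover_card (h : IsMaxIndep G S) :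
    S.ncard + (nbhd G S).ncard = Nat.card V := by
  rw [← Set.ncard_union_eq (disjoint_nbhd h.1) (Set.toFinite _) (Set.toFinite _),
    maxIndep_cover h, Set.ncard_univ]

lemma critDiff_bddAbove (G : SimpleGraph V) :
    BddAbove {d : ℤ | ∃ S : Set V, IsIndep G S ∧ d = (S.ncard : ℤ) - ((nbhd G S).ncard : ℤ)} := by
  refine ⟨Nat.card V, fun d hd => ?_⟩
  obtain ⟨S, -, rfl⟩ := hd
  have h1 := ncard_le_card (V := V) S
  have h2 : (0:ℤ) ≤ ((nbhd G S).ncard : ℤ) := Int.natCast_nonneg _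
  have : ((S.ncard : ℤ)) ≤ (Nat.card V : ℤ) := by exact_mod_cast h1
  omega

lemma critDiff_nonempty (G : SimpleGraph V) :
    Set.Nonempty {d : ℤ | ∃ S : Set V, IsIndep G S ∧ d = (S.ncard : ℤ) - ((nbhd G S).ncard : ℤ)} :=
  ⟨0, ∅, indep_empty G, by simp [nbhd_empty]⟩

lemma le_critDiff (h : IsIndep G S) :
    (S.ncard : ℤ) - ((nbhd G S).ncard : ℤ) ≤ critDiff G :=
  le_csSup (critDiff_bddAbove G) ⟨S, h, rfl⟩

/-- A matching has twice as many vertices as edges. -/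
lemma verts_ncard_eq (hM : M.IsMatching) : M.verts.ncard = 2 * M.edgeSet.ncard := by
  classical
  haveI : Fintype V := Fintype.ofFinite V
  set f : V → Sym2 V := fun v =>
    if h : v ∈ M.verts then (hM.toEdge ⟨v, h⟩ : Sym2 V) else s(v, v) with hf
  have hmaps : ∀ v ∈ M.verts.toFinset, f v ∈ M.edgeSet.toFinset := by
    intro v hv
    rw [Set.mem_toFinset] at hv
    simp only [hf, dif_pos hv, Set.mem_toFinset]
    exact (hM.toEdge ⟨v, hv⟩).2
  have hsum := Finset.card_eq_sum_card_fiberwise hmaps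
  have hfiber : ∀ e ∈ M.edgeSet.toFinset,
      (M.verts.toFinset.filter (fun v => f v = e)).card = 2 := by
    intro e he
    rw [Set.mem_toFinset] at he
    induction e with
    | _ a b =>
      have hab : M.Adj a b := (Subgraph.mem_edgeSet).mp he
      have hane : a ≠ b := (M.adj_sub hab).ne
      have ha : a ∈ M.verts := M.edge_vert hab
      have hb : b ∈ M.verts := M.edge_vert hab.symm
      have hset : (M.verts.toFinset.filter (fun v => f v = s(a, b))) = {a, b} := by
        ext v
        simp only [Finset.mem_filter, Set.mem_toFinset, Finset.mem_insert, Finset.mem_singleton]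
        constructor
        · rintro ⟨hv, hfv⟩
          simp only [hf, dif_pos hv] at hfv
          obtain ⟨w, hw, -⟩ := hM hv
          have : hM.toEdge ⟨v, hv⟩ = ⟨s(v, w), hw⟩ := hM.toEdge_eq_of_adj hw
          rw [this] at hfv
          simp only at hfv
          rw [Sym2.eq_iff] at hfv
          tauto
        · rintro (rfl | rfl)
          · refine ⟨ha, ?_⟩
            simp only [hf, dif_pos ha]
            rw [hM.toEdge_eq_of_adj hab]
          · refine ⟨hb, ?_⟩
            simp only [hf, dif_pos hb]
            rw [hM.toEdge_eq_of_adj hab.symm]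
            simp [Sym2.eq_swap]
      rw [hset]
      rw [Finset.card_insert_of_notMem (by simpa using hane), Finset.card_singleton]
  rw [Finset.sum_congr rfl hfiber, Finset.sum_const, smul_eq_mul] at hsum
  rw [Set.ncard_eq_toFinset_card', Set.ncard_eq_toFinset_card', hsum, mul_comm]

/-- Key counting lemma: for any matching `M` and any set `S`,
`|S| + |V(M)| ≤ |V| + |N(S)|`. -/
lemma matching_count (hM : M.IsMatching) (S : Set V) :
    S.ncard + M.verts.ncard ≤ Nat.card V + (nbhd G S).ncard := by
  classical
  set g : V → V := fun v => if h : v ∈ M.verts then (hM h).choose else v with hg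
  have hgadj : ∀ {v} (h : v ∈ M.verts), M.Adj v (g v) := by
    intro v h
    simp only [hg, dif_pos h]
    exact (hM h).choose_spec.1
  have hsplit : (M.verts ∩ S).ncard + (M.verts \ S).ncard = M.verts.ncard :=
    Set.ncard_inter_add_ncard_diff_eq_ncard M.verts S (Set.toFinite _)
  have h1 : S.ncard + (M.verts \ S).ncard ≤ Nat.card V := by
    rw [← Set.ncard_union_eq (Set.disjoint_sdiff_right) (Set.toFinite _) (Set.toFinite _)]
    exact ncard_le_card _
  have h2 : (M.verts ∩ S).ncard ≤ (nbhd G S).ncard := by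
    have himg : (M.verts ∩ S).ncard = (g '' (M.verts ∩ S)).ncard := by
      rw [Set.ncard_image_of_injOn]
      rintro v1 ⟨hv1, hv1S⟩ v2 ⟨hv2, hv2S⟩ heq
      have ha1 : M.Adj (g v1) v1 := (hgadj hv1).symm
      have ha2 : M.Adj (g v1) v2 := heq ▸ (hgadj hv2).symm
      have hw : g v1 ∈ M.verts := M.edge_vert ha1
      obtain ⟨u, -, huniq⟩ := hM hw
      rw [huniq v1 ha1, huniq v2 ha2]
    have hsub : g '' (M.verts ∩ S) ⊆ nbhd G S := by
      rintro w ⟨v, ⟨hv, hvS⟩, rfl⟩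
      exact ⟨v, hvS, (M.adj_sub (hgadj hv)).symm⟩
    rw [himg]
    exact Set.ncard_le_ncard hsub (Set.toFinite _)
  omega

lemma match_bddAbove (G : SimpleGraph V) :
    BddAbove {n | ∃ M : Subgraph G, M.IsMatching ∧ M.edgeSet.ncard = n} := by
  refine ⟨Nat.card (Sym2 V), fun n hn => ?_⟩
  obtain ⟨M, -, rfl⟩ := hn
  exact (Set.ncard_le_ncard (Set.subset_univ _) Set.finite_univ).trans_eq (Set.ncard_univ _)

lemma le_matchNum (hM : M.IsMatching) : M.edgeSet.ncard ≤ matchNum G :=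
  le_csSup (match_bddAbove G) ⟨M, hM, rfl⟩

lemma bot_isMatching (G : SimpleGraph V) : (⊥ : Subgraph G).IsMatching := by
  rintro v hv
  simp [Subgraph.verts_bot] at hv

lemma exists_max_matching (G : SimpleGraph V) :
    ∃ M : Subgraph G, M.IsMatching ∧ M.edgeSet.ncard = matchNum G := by
  have h := Nat.sSup_mem (s := {n | ∃ M : Subgraph G, M.IsMatching ∧ M.edgeSet.ncard = n})
    ⟨0, ⊥, bot_isMatching G, by simp⟩ (match_bddAbove G)
  obtain ⟨M, hM, hc⟩ := h
  exact ⟨M, hM, hc⟩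

/-- Given an injective partner function from `nbhd G S` into `S`, build a matching of
size `(nbhd G S).ncard`. -/
lemma matching_of_injective (hS : IsIndep G S)
    (f : ↥(nbhd G S) → V) (hinj : Function.Injective f)
    (hfS : ∀ v, f v ∈ S) (hfadj : ∀ v : ↥(nbhd G S), G.Adj ↑v (f v)) :
    ∃ M : Subgraph G, M.IsMatching ∧ M.edgeSet.ncard = (nbhd G S).ncard := by
  classical
  have hdisj := disjoint_nbhd hS
  have hne : ∀ (v : ↥(nbhd G S)) (w : V), w ∈ S → (w : V) ≠ ↑v := by
    intro v w hw heq
    exact absurd v.2 (by rw [← heq]; exact Set.disjoint_left.mp hdisj hw)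
  have key : ∀ N : Subgraph G,
      (∀ a b, N.Adj a b ↔ ∃ v : ↥(nbhd G S), (a = ↑v ∧ b = f v) ∨ (b = ↑v ∧ a = f v)) →
      N.edgeSet.ncard = (nbhd G S).ncard := by
    intro N hN
    have hedge : N.edgeSet = (fun v : ↥(nbhd G S) => s((v : V), f v)) '' Set.univ := by
      ext e
      induction e with
      | _ a b =>
        simp only [Subgraph.mem_edgeSet, Set.image_univ, Set.mem_range, hN]
        constructor
        · rintro ⟨v, ⟨rfl, rfl⟩ | ⟨rfl, rfl⟩⟩
          · exact ⟨v, rfl⟩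
          · exact ⟨v, Sym2.eq_swap⟩
        · rintro ⟨v, hv⟩
          rw [Sym2.eq_iff] at hv
          rcases hv with ⟨rfl, rfl⟩ | ⟨rfl, rfl⟩
          · exact ⟨v, Or.inl ⟨rfl, rfl⟩⟩
          · exact ⟨v, Or.inr ⟨rfl, rfl⟩⟩
    rw [hedge, Set.ncard_image_of_injOn, Set.ncard_univ, Nat.card_coe_set_eq]
    rintro v1 - v2 - heq
    rw [Sym2.eq_iff] at heq
    rcases heq with ⟨h1, -⟩ | ⟨h1, -⟩
    · exact Subtype.coe_injective h1
    · exact absurd h1.symm (hne v1 (f v2) (hfS v2))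
  refine ⟨{ verts := {a | ∃ v : ↥(nbhd G S), a = ↑v ∨ a = f v}
            Adj := fun a b => ∃ v : ↥(nbhd G S), (a = ↑v ∧ b = f v) ∨ (b = ↑v ∧ a = f v)
            adj_sub := by
              rintro a b ⟨v, ⟨rfl, rfl⟩ | ⟨rfl, rfl⟩⟩
              · exact hfadj v
              · exact (hfadj v).symm
            edge_vert := by
              rintro a b ⟨v, ⟨rfl, -⟩ | ⟨-, rfl⟩⟩
              · exact ⟨v, Or.inl rfl⟩
              · exact ⟨v, Or.inr rfl⟩
            symm := by
              constructor
              rintro a b ⟨v, ⟨rfl, rfl⟩ | ⟨rfl, rfl⟩⟩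
              · exact ⟨v, Or.inr ⟨rfl, rfl⟩⟩
              · exact ⟨v, Or.inl ⟨rfl, rfl⟩⟩ }, ?_, ?_⟩
  · rintro a ⟨v, rfl | rfl⟩
    · refine ⟨f v, ⟨v, Or.inl ⟨rfl, rfl⟩⟩, ?_⟩
      rintro b ⟨u, ⟨hu, rfl⟩ | ⟨rfl, hu⟩⟩
      · rw [Subtype.coe_injective hu]
      · exact absurd hu.symm (hne v (f u) (hfS u))
    · refine ⟨↑v, ⟨v, Or.inr ⟨rfl, rfl⟩⟩, ?_⟩
      rintro b ⟨u, ⟨hu, -⟩ | ⟨rfl, hu⟩⟩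
      · exact absurd hu (hne u (f v) (hfS v))
      · rw [hinj hu]
  · exact key _ (fun a b => Iff.rfl)

/-- From a critical independent set, Hall's theorem yields an injective partner
function from `N(S)` into `S`. -/
lemma crit_partner (hS : IsCritIndep G S) :
    ∃ f : ↥(nbhd G S) → V, Function.Injective f ∧
      (∀ v, f v ∈ S) ∧ ∀ v : ↥(nbhd G S), G.Adj ↑v (f v) := by
  classical
  haveI : Fintype V := Fintype.ofFinite V
  set t : ↥(nbhd G S) → Finset V :=
    fun v => (Set.toFinite {u | u ∈ S ∧ G.Adj ↑v u}).toFinset with ht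
  have hall : ∀ Y : Finset ↥(nbhd G S), Y.card ≤ (Y.biUnion t).card := by
    intro Y
    set Y' : Set V := ↑(Y.image (Subtype.val)) with hY'
    have hycard : Y'.ncard = Y.card := by
      rw [hY', Set.ncard_coe_finset, Finset.card_image_of_injective _ Subtype.coe_injective]
    set S' : Set V := S \ nbhd G Y' with hS'
    have hindep' : IsIndep G S' := hS.1.mono Set.diff_subset
    have hcrit := (le_critDiff hindep').trans hS.2.ge
    have hsplit : (S ∩ nbhd G Y').ncard + S'.ncard = S.ncard :=
      Set.ncard_inter_add_ncard_diff_eq_ncard S (nbhd G Y') (Set.toFinite _)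
    have hY'N : Y' ⊆ nbhd G S := by
      rintro v hv
      simp only [hY', Finset.coe_image, Set.mem_image, Finset.mem_coe] at hv
      obtain ⟨u, -, rfl⟩ := hv
      exact u.2
    have hNsub : nbhd G S' ⊆ nbhd G S \ Y' := by
      rintro v ⟨w, hw, hadj⟩
      refine ⟨⟨w, hw.1, hadj⟩, fun hvY => hw.2 ⟨v, hvY, hadj.symm⟩⟩
    have hdisj2 : Disjoint (nbhd G S') Y' := by
      rw [Set.disjoint_left]
      exact fun v hv => (hNsub hv).2
    have hunion : (nbhd G S').ncard + Y'.ncard ≤ (nbhd G S).ncard := by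
      rw [← Set.ncard_union_eq hdisj2 (Set.toFinite _) (Set.toFinite _)]
      exact Set.ncard_le_ncard (Set.union_subset (fun v hv => (hNsub hv).1) hY'N)
        (Set.toFinite _)
    have hc : Y'.ncard ≤ (S ∩ nbhd G Y').ncard := by omega
    have hsub : S ∩ nbhd G Y' ⊆ ↑(Y.biUnion t) := by
      rintro u ⟨huS, v, hvY', hadj⟩
      simp only [hY', Finset.coe_image, Set.mem_image, Finset.mem_coe] at hvY'
      obtain ⟨vi, hvi, rfl⟩ := hvY'
      simp only [Finset.coe_biUnion, Set.mem_iUnion, Finset.mem_coe]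
      exact ⟨vi, hvi, by simp [ht, huS, hadj.symm]⟩
    have := (Set.ncard_le_ncard hsub (Set.toFinite _)).trans_eq (Set.ncard_coe_finset _)
    omega
  obtain ⟨f, hfinj, hft⟩ := (Finset.all_card_le_biUnion_card_iff_exists_injective t).mp hall
  refine ⟨f, hfinj, fun v => ?_, fun v => ?_⟩
  · have := hft v; rw [ht, Set.Finite.mem_toFinset] at this; exact this.1
  · have := hft v; rw [ht, Set.Finite.mem_toFinset] at this; exact this.2

end AuxLemmas

/-- A finite simple graph `G` is a König–Egerváry graph if and only if every
maximum independent set of `G` is a critical independent set. -/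
theorem KE_iff_forall_maxIndep_critIndep [Finite V] (G : SimpleGraph V) :
    KoenigEgervary G ↔ ∀ S : Set V, IsMaxIndep G S → IsCritIndep G S := by
  constructor
  · intro hKE S hS
    refine ⟨hS.1, le_antisymm (le_critDiff hS.1) ?_⟩
    refine csSup_le (critDiff_nonempty G) ?_
    rintro d ⟨T, hT, rfl⟩
    obtain ⟨M, hM, hMc⟩ := exists_max_matching G
    have hB := matching_count hM T
    have hv2 := verts_ncard_eq hM
    have hcov := maxIndep_cover_card hS
    have hα : S.ncard = indepNum G := hS.2
    rw [KoenigEgervary] at hKE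
    rw [hv2, hMc] at hB
    omega
  · intro h
    obtain ⟨S, hS⟩ := exists_maxIndep G
    have hC := h S hS
    obtain ⟨f, hfinj, hfS, hfadj⟩ := crit_partner hC
    obtain ⟨M, hM, hMc⟩ := matching_of_injective hS.1 f hfinj hfS hfadj
    have h1 : (nbhd G S).ncard ≤ matchNum G := hMc ▸ le_matchNum hM
    obtain ⟨M0, hM0, hM0c⟩ := exists_max_matching G
    have hB := matching_count hM0 S
    have hv2 := verts_ncard_eq hM0
    have hcov := maxIndep_cover_card hS
    rw [KoenigEgervary, ← hS.2]
    rw [hv2, hM0c] at hB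
    omega

end KEPaper
end

section
/- If G is a finite König–Egerváry graph, then for every independent set S of G one has |S| − |N(S)| ≤ α(G) − μ(G). -/
namespace KEPaper

open SimpleGraph

variable {V : Type*}

/-- In a matching, two edges sharing a vertex are equal. -/
lemma matching_eq_of_mem {G : SimpleGraph V} {M : Subgraph G} (hM : M.IsMatching)
    {e f : Sym2 V} (he : e ∈ M.edgeSet) (hf : f ∈ M.edgeSet) {v : V}
    (hve : v ∈ e) (hvf : v ∈ f) : e = f := by
  obtain ⟨w, rfl⟩ := Sym2.mem_iff_exists.mp hve
  obtain ⟨u, rfl⟩ := Sym2.mem_iff_exists.mp hvf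
  rw [SimpleGraph.Subgraph.mem_edgeSet] at he hf
  obtain ⟨x, -, hx⟩ := hM (M.edge_vert he)
  rw [hx w he, hx u hf]

/-- A matching covers twice as many vertices as it has edges (inequality form). -/
lemma two_mul_edge_le [Finite V] {G : SimpleGraph V} {M : Subgraph G} (hM : M.IsMatching) :
    2 * M.edgeSet.ncard ≤ M.verts.ncard := by
  have hend : ∀ e : M.edgeSet, (e.1.out).1 ∈ M.verts ∧ (e.1.out).2 ∈ M.verts ∧
      M.Adj (e.1.out).1 (e.1.out).2 := by
    intro ⟨e, he⟩
    have : M.Adj e.out.1 e.out.2 := by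
      rw [← SimpleGraph.Subgraph.mem_edgeSet]
      have h1 : Quot.mk (Sym2.Rel V) e.out = e := e.out_eq
      simpa [Sym2.mk] using h1 ▸ he
    exact ⟨this.fst_mem, this.snd_mem, this⟩
  set F : M.edgeSet × Bool → M.verts := fun p => if p.2 then ⟨p.1.1.out.1, (hend p.1).1⟩
    else ⟨p.1.1.out.2, (hend p.1).2.1⟩ with hFdef
  have hF : Function.Injective F := by
    rintro ⟨⟨e, he⟩, b⟩ ⟨⟨f, hf⟩, c⟩ hfe
    have hmem : ∀ (g : Sym2 V) (hg : g ∈ M.edgeSet) (b : Bool),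
        (F (⟨g, hg⟩, b) : V) ∈ g := by
      intro g hg b
      cases b <;> simp only [hFdef, if_true, if_false, Bool.false_eq_true] <;>
        first
          | exact Sym2.out_snd_mem g
          | exact Sym2.out_fst_mem g
    have hef : e = f := by
      have h1 := hmem e he b
      have h2 := hmem f hf c
      rw [hfe] at h1
      exact matching_eq_of_mem hM he hf h1 h2
    subst hef
    have hne : e.out.1 ≠ e.out.2 := (hend ⟨e, he⟩).2.2.ne
    have hbc : b = c := by
      cases b <;> cases c <;>
        first
          | rfl
          | (exfalso; exact hne (by simpa [hFdef, Subtype.ext_iff] using hfe))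
          | (exfalso; exact hne (by simpa [hFdef, Subtype.ext_iff] using hfe.symm))
    simp [hbc]
  have := Nat.card_le_card_of_injective F hF
  simpa [Nat.card_prod, Nat.card_coe_set_eq, mul_comm] using this

/-- Key counting lemma: for any matching `M` and independent set `S`,
`|S| + 2|E(M)| ≤ |V| + |N(S)|`. -/
lemma key_count [Finite V] {G : SimpleGraph V} {M : G.Subgraph} (hM : M.IsMatching)
    {S : Set V} (hS : IsIndep G S) :
    S.ncard + 2 * M.edgeSet.ncard ≤ Nat.card V + (nbhd G S).ncard := by
  classical
  set f : V → V := fun v => if h : v ∈ M.verts then (hM h).choose else v with hfdef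
  have hadj : ∀ v (h : v ∈ M.verts), M.Adj v (f v) := by
    intro v h
    simp only [hfdef, dif_pos h]
    exact (hM h).choose_spec.1
  have h1 : (M.verts ∩ S).ncard ≤ (nbhd G S).ncard := by
    apply Set.ncard_le_ncard_of_injOn f
    · rintro v ⟨hv, hvS⟩
      exact ⟨v, hvS, (M.adj_sub (hadj v hv)).symm⟩
    · rintro v1 ⟨hv1, -⟩ v2 ⟨hv2, -⟩ hf
      have ha1 : M.Adj (f v1) v1 := (hadj v1 hv1).symm
      have ha2 : M.Adj (f v1) v2 := hf ▸ (hadj v2 hv2).symm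
      obtain ⟨x, -, hx⟩ := hM (M.edge_vert ha1)
      rw [hx v1 ha1, hx v2 ha2]
  have h2 : (M.verts ∩ S).ncard + (M.verts \ S).ncard = M.verts.ncard :=
    Set.ncard_inter_add_ncard_diff_eq_ncard M.verts S
  have h3 : S.ncard + (M.verts \ S).ncard ≤ Nat.card V := by
    have hd : Disjoint S (M.verts \ S) := Set.disjoint_left.mpr fun a ha h2 => h2.2 ha
    rw [← Set.ncard_union_eq hd]
    calc (S ∪ M.verts \ S).ncard ≤ (Set.univ : Set V).ncard :=
          Set.ncard_le_ncard (Set.subset_univ _)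
      _ = Nat.card V := Set.ncard_univ V
  have h4 : 2 * M.edgeSet.ncard ≤ M.verts.ncard := two_mul_edge_le hM
  omega

/-- If `G` is a finite König–Egerváry graph, then every independent set `S` of
`G` satisfies `|S| - |N(S)| ≤ α(G) - μ(G)`. -/
theorem indep_diff_le_of_KE [Finite V] (G : SimpleGraph V)
    (hG : KoenigEgervary G) :
    ∀ S : Set V, IsIndep G S →
      (S.ncard : ℤ) - ((nbhd G S).ncard : ℤ) ≤ (indepNum G : ℤ) - (matchNum G : ℤ) := by
  intro S hS
  -- the matching number is attained by some matching
  have hne : ({n | ∃ M : Subgraph G, M.IsMatching ∧ M.edgeSet.ncard = n}).Nonempty := by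
    refine ⟨0, ⊥, ?_, by simp⟩
    intro v hv
    simp [SimpleGraph.Subgraph.verts_bot] at hv
  have hbdd : BddAbove {n | ∃ M : Subgraph G, M.IsMatching ∧ M.edgeSet.ncard = n} := by
    refine ⟨Nat.card (Sym2 V), ?_⟩
    rintro n ⟨M, -, rfl⟩
    calc M.edgeSet.ncard ≤ (Set.univ : Set (Sym2 V)).ncard :=
          Set.ncard_le_ncard (Set.subset_univ _)
      _ = Nat.card (Sym2 V) := Set.ncard_univ _
  have hmem : matchNum G ∈ {n | ∃ M : Subgraph G, M.IsMatching ∧ M.edgeSet.ncard = n} :=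
    Nat.sSup_mem hne hbdd
  obtain ⟨M, hM, hMcard⟩ := hmem
  have hkey := key_count hM hS
  rw [hMcard, KoenigEgervary] at *
  rw [hG] at hkey
  omega

end KEPaper
end
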